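/- arXiv:2511.13509 — 10 statements merged into one kernel-verified Lean document; each statement's English description precedes it below -/
import Mathlib

section
/- (Lemma 1) Let a, b, c > 0 be real constants, let L > 0, and let V : (0,∞) → (0,∞) be a function differentiable at L whose values satisfy a·V(s)/s + b·V(s)³ = c for all s in a neighborhood of L. Define T(s) := s / V(s). Then T is differentiable at L and T'(L) > 0. -/
/-- Lemma 1: the ascent time T(s) = s / V(s) is differentiable at L
with positive derivative. -/
theorem ascent_time_deriv_pos (a b c L : ℝ)
    (ha : 0 < a) (hb : 0 < b) (hc : 0 < c) (hL : 0 < L)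
    (V : ℝ → ℝ) (V' : ℝ)
    (hpos : ∀ s, 0 < s → 0 < V s)
    (hderiv : HasDerivAt V V' L)
    (heq : ∀ᶠ s in nhds L, a * V s / s + b * (V s) ^ 3 = c) :
    ∃ T' : ℝ, HasDerivAt (fun s => s / V s) T' L ∧ 0 < T' := by
  have hv : 0 < V L := hpos L hL
  -- derivative of the constraint function
  have hF : HasDerivAt (fun s => a * V s / s + b * (V s) ^ 3)
      (((a * V') * L - (a * V L) * 1) / L ^ 2 + b * (3 * V L ^ 2 * V')) L :=
    ((hderiv.const_mul a).div (hasDerivAt_id L) hL.ne').add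
      ((hderiv.pow 3).const_mul b)
  have hF0 : HasDerivAt (fun s => a * V s / s + b * (V s) ^ 3) 0 L :=
    (hasDerivAt_const L c).congr_of_eventuallyEq heq
  have hzero : ((a * V') * L - (a * V L) * 1) / L ^ 2 + b * (3 * V L ^ 2 * V') = 0 :=
    hF.unique hF0
  have hT : HasDerivAt (fun s => s / V s) ((1 * V L - L * V') / V L ^ 2) L :=
    (hasDerivAt_id L).div hderiv hv.ne'
  refine ⟨_, hT, ?_⟩
  have hL2 : (0:ℝ) < L ^ 2 := by positivity
  have hkey : (a * V') * L - a * V L + b * (3 * V L ^ 2 * V') * L ^ 2 = 0 := by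
    field_simp at hzero
    nlinarith [hzero]
  -- L * V' * (a + 3*b*(V L)^2*L) = a * V L, so L * V' < V L
  have h1 : L * V' * (a + 3 * b * V L ^ 2 * L) = a * V L := by nlinarith [hkey]
  have hK : 0 < a + 3 * b * V L ^ 2 * L := by positivity
  have h2 : L * V' < V L := by
    nlinarith [h1, hK, mul_pos hv (mul_pos (mul_pos (mul_pos three_pos hb) (pow_pos hv 2)) hL)]
  have h3 : 0 < 1 * V L - L * V' := by linarith
  exact div_pos h3 (pow_pos hv 2)
end

section
/- Let a, b, c > 0 be real constants. For each L > 0 let V(L) be the unique positive real solution of a·V/L + b·V³ = c, and define the ascent time T(L) := L / V(L). Then T is strictly increasing on (0,∞): if 0 < L₁ < L₂ then L₁/V(L₁) < L₂/V(L₂). -/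
/-- the ascent time T(L) = L / V(L) is strictly increasing on (0,∞). -/
theorem ascent_time_strictMono (a b c : ℝ)
    (ha : 0 < a) (hb : 0 < b) (hc : 0 < c)
    (V : ℝ → ℝ)
    (hV : ∀ L, 0 < L → 0 < V L ∧ a * V L / L + b * (V L) ^ 3 = c)
    (L₁ L₂ : ℝ) (h₁ : 0 < L₁) (h₁₂ : L₁ < L₂) :
    L₁ / V L₁ < L₂ / V L₂ := by
  have h₂ : 0 < L₂ := h₁.trans h₁₂
  obtain ⟨hv1, he1⟩ := hV L₁ h₁
  obtain ⟨hv2, he2⟩ := hV L₂ h₂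
  -- V is increasing between L₁ and L₂
  have hVlt : V L₁ < V L₂ := by
    by_contra h
    push_neg at h
    have h1 : a * V L₂ / L₂ < a * V L₁ / L₁ := by
      rw [div_lt_div_iff₀ h₂ h₁]
      nlinarith [mul_nonneg (mul_nonneg ha.le (sub_nonneg.2 h)) h₁.le,
        mul_pos (mul_pos ha hv1) (sub_pos.2 h₁₂)]
    have h2 : b * (V L₂) ^ 3 ≤ b * (V L₁) ^ 3 := by
      have := pow_le_pow_left₀ hv2.le h 3
      nlinarith
    linarith
  -- from the equations, a*V₁/L₁ > a*V₂/L₂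
  have hkey : a * V L₂ / L₂ < a * V L₁ / L₁ := by
    have h3 : b * (V L₁) ^ 3 < b * (V L₂) ^ 3 :=
      mul_lt_mul_of_pos_left (pow_lt_pow_left₀ hVlt hv1.le (by norm_num)) hb
    linarith
  have hpos2 : 0 < a * V L₂ / L₂ := by positivity
  have : V L₂ / L₂ < V L₁ / L₁ := by
    rw [mul_div_assoc, mul_div_assoc] at hkey
    exact lt_of_mul_lt_mul_left hkey ha.le
  calc L₁ / V L₁ = (V L₁ / L₁)⁻¹ := by rw [inv_div]
    _ < (V L₂ / L₂)⁻¹ := by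
        apply inv_strictAnti₀ (by positivity) this
    _ = L₂ / V L₂ := by rw [inv_div]
end

section
/- (Proposition 1) Let a, b, c > 0 be real constants and let H, D be reals with H > 0 and D ≥ 0. For each L > 0 let V(L) be the unique positive real solution of a·V/L + b·V³ = c, and define T(L) := L / V(L). Set L₀ := √(H² + D²). Then for every L ≥ L₀ one has T(L) ≥ T(L₀), with strict inequality whenever L > L₀. Consequently, among all ascent paths joining the given start and end points (all of which have arclength at least L₀, the length of the straight segment), the minimum ascent time is attained exactly at arclength L₀. -/
/-- Proposition 1: the minimum ascent time among paths joining the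
start/end points (arclength ≥ √(H² + D²)) is attained exactly at the straight line. -/
theorem straight_line_brachistochrone (a b c H D : ℝ)
    (ha : 0 < a) (hb : 0 < b) (hc : 0 < c) (hH : 0 < H) (hD : 0 ≤ D)
    (V : ℝ → ℝ)
    (hV : ∀ L, 0 < L → 0 < V L ∧ a * V L / L + b * (V L) ^ 3 = c) :
    ∀ L, Real.sqrt (H ^ 2 + D ^ 2) ≤ L →
      Real.sqrt (H ^ 2 + D ^ 2) / V (Real.sqrt (H ^ 2 + D ^ 2)) ≤ L / V L ∧
      (Real.sqrt (H ^ 2 + D ^ 2) < L →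
        Real.sqrt (H ^ 2 + D ^ 2) / V (Real.sqrt (H ^ 2 + D ^ 2)) < L / V L) := by
  intro L hL
  set L₀ := Real.sqrt (H ^ 2 + D ^ 2) with hL0def
  have hL0pos : 0 < L₀ := Real.sqrt_pos.2 (by positivity)
  have hLpos : 0 < L := lt_of_lt_of_le hL0pos hL
  obtain ⟨hV0, e0⟩ := hV L₀ hL0pos
  obtain ⟨hVL, eL⟩ := hV L hLpos
  have e0' : a * V L₀ + b * (V L₀) ^ 3 * L₀ = c * L₀ := by
    field_simp at e0; linarith
  have eL' : a * V L + b * (V L) ^ 3 * L = c * L := by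
    field_simp at eL; linarith
  have hid : a * (V L₀ * L - V L * L₀) = b * L₀ * L * ((V L) ^ 3 - (V L₀) ^ 3) := by
    linear_combination L * e0' - L₀ * eL'
  have key : L₀ * V L ≤ L * V L₀ := by
    by_contra h
    push_neg at h
    -- h : L * V L₀ < L₀ * V L, i.e. T(L) < T(L₀); derive V L < V L₀
    have hVlt : V L < V L₀ := by
      by_contra hge
      push_neg at hge
      have hcube : V L₀ ^ 3 ≤ V L ^ 3 := pow_le_pow_left₀ hV0.le hge 3
      have hrhs : 0 ≤ b * L₀ * L * ((V L) ^ 3 - (V L₀) ^ 3) :=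
        mul_nonneg (by positivity) (by linarith)
      have hlhs : a * (V L₀ * L - V L * L₀) < 0 :=
        mul_neg_of_pos_of_neg ha (by linarith)
      linarith
    -- then L = T(L)·V(L) < T(L₀)·V(L₀) = L₀, contradicting L₀ ≤ L
    nlinarith [mul_pos hV0 hVL]
  constructor
  · rw [div_le_div_iff₀ hV0 hVL]; linarith
  · intro hlt
    rw [div_lt_div_iff₀ hV0 hVL]
    rcases lt_or_eq_of_le key with h | h
    · linarith
    · exfalso
      have hz : V L₀ * L - V L * L₀ = 0 := by linear_combination -h
      have hbl : (0:ℝ) < b * L₀ * L := by positivity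
      have hcube : (V L) ^ 3 = (V L₀) ^ 3 := by
        have h0 : b * L₀ * L * ((V L) ^ 3 - (V L₀) ^ 3) = 0 := by
          rw [← hid, hz, mul_zero]
        have := (mul_eq_zero.mp h0).resolve_left (ne_of_gt hbl)
        linarith
      have hVeq : V L = V L₀ := le_antisymm
        (by nlinarith [sq_nonneg (V L - V L₀), sq_nonneg (V L + V L₀), mul_pos hVL hV0])
        (by nlinarith [sq_nonneg (V L - V L₀), sq_nonneg (V L + V L₀), mul_pos hVL hV0])
      rw [hVeq] at h
      have : L₀ = L := mul_right_cancel₀ (ne_of_gt hV0) h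
      linarith
end

section
/- Let a, b, c > 0 be real constants, let L > 0, and let V : (0,∞) → (0,∞) be a function differentiable at L whose values satisfy a·V(s)/s + b·V(s)³ = c for all s in a neighborhood of L. Define T(s) := s / V(s). Then T'(L) = (3·b·L²/a) · V'(L). -/
/-- T'(L) = (3bL²/a)·V'(L). -/
theorem ascent_time_deriv_relation (a b c L : ℝ)
    (ha : 0 < a) (hb : 0 < b) (hc : 0 < c) (hL : 0 < L)
    (V : ℝ → ℝ) (V' : ℝ)
    (hpos : ∀ s, 0 < s → 0 < V s)
    (hderiv : HasDerivAt V V' L)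
    (heq : ∀ᶠ s in nhds L, a * V s / s + b * (V s) ^ 3 = c) :
    HasDerivAt (fun s => s / V s) (3 * b * L ^ 2 / a * V') L := by
  have hVL : 0 < V L := hpos L hL
  -- derivative of the constraint function
  have h1 : HasDerivAt (fun s => a * V s / s + b * (V s) ^ 3)
      ((a * V' * L - a * V L * 1) / L ^ 2 + b * (3 * (V L) ^ 2 * V')) L := by
    exact (((hderiv.const_mul a).div (hasDerivAt_id L) hL.ne')).add
      (((hderiv.pow 3).const_mul b).congr_deriv (by ring))
  have h0 : HasDerivAt (fun _ : ℝ => c) (0 : ℝ) L := hasDerivAt_const _ _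
  have hEq0 : (a * V' * L - a * V L * 1) / L ^ 2 + b * (3 * (V L) ^ 2 * V') = 0 := by
    have := (h1.congr_of_eventuallyEq (heq.mono fun s hs => hs.symm)).unique h0
    linarith [this]
  -- derivative of T
  have h2 : HasDerivAt (fun s => s / V s) ((1 * V L - L * V') / (V L) ^ 2) L :=
    (hasDerivAt_id L).div hderiv hVL.ne'
  convert h2 using 1
  have hL2 : (L : ℝ) ^ 2 ≠ 0 := pow_ne_zero _ hL.ne'
  have hV2 : (V L) ^ 2 ≠ 0 := pow_ne_zero _ hVL.ne'
  field_simp at hEq0 ⊢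
  nlinarith [hEq0, sq_nonneg (V L), sq_nonneg L]
end

section
/- Let m, g, Crr, H, b, c > 0 be real constants. Define a(D) := m·g·(H + Crr·D) and L(D) := √(H² + D²). Let D > 0 and let V : (0,∞) → (0,∞) be a function differentiable at D whose values satisfy a(s)·V(s)/L(s) + b·V(s)³ = c for all s in a neighborhood of D. Then V'(D) = (V(D)/L(D)²) · m·g·H·(D − Crr·H) / (a(D) + 3·b·V(D)²·L(D)). -/
/-- implicit differentiation with respect to the horizontal distance D. -/
theorem deriv_speed_wrt_D (m g Crr H b c : ℝ)
    (hm : 0 < m) (hg : 0 < g) (hCrr : 0 < Crr) (hH : 0 < H) (hb : 0 < b) (hc : 0 < c)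
    (D : ℝ) (hD : 0 < D)
    (V : ℝ → ℝ) (V' : ℝ)
    (hpos : ∀ s, 0 < s → 0 < V s)
    (hderiv : HasDerivAt V V' D)
    (heq : ∀ᶠ s in nhds D,
      m * g * (H + Crr * s) * V s / Real.sqrt (H ^ 2 + s ^ 2) + b * (V s) ^ 3 = c) :
    V' = V D / (Real.sqrt (H ^ 2 + D ^ 2)) ^ 2 * (m * g * H * (D - Crr * H)) /
      (m * g * (H + Crr * D) + 3 * b * (V D) ^ 2 * Real.sqrt (H ^ 2 + D ^ 2)) := by
  have hHD : (0:ℝ) < H ^ 2 + D ^ 2 := by positivity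
  set Ld := Real.sqrt (H ^ 2 + D ^ 2) with hLd
  have hL : 0 < Ld := Real.sqrt_pos.mpr hHD
  have hLsq : Ld ^ 2 = H ^ 2 + D ^ 2 := Real.sq_sqrt hHD.le
  have hV : 0 < V D := hpos D hD
  have hsq : HasDerivAt (fun s : ℝ => H ^ 2 + s ^ 2) (2 * D) D := by
    simpa using (hasDerivAt_pow 2 D).const_add (H ^ 2)
  have hLderiv : HasDerivAt (fun s => Real.sqrt (H ^ 2 + s ^ 2)) (D / Ld) D := by
    have h := (Real.hasDerivAt_sqrt hHD.ne').comp D hsq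
    refine h.congr_deriv ?_
    rw [hLd]
    field_simp
  have ha : HasDerivAt (fun s => m * g * (H + Crr * s)) (m * g * Crr) D := by
    have h : HasDerivAt (fun s : ℝ => H + Crr * s) Crr D := by
      simpa using ((hasDerivAt_id D).const_mul Crr).const_add H
    simpa using h.const_mul (m * g)
  have hnum : HasDerivAt (fun s => m * g * (H + Crr * s) * V s)
      (m * g * Crr * V D + m * g * (H + Crr * D) * V') D := ha.mul hderiv
  have hdiv : HasDerivAt (fun s => m * g * (H + Crr * s) * V s / Real.sqrt (H ^ 2 + s ^ 2))
      (((m * g * Crr * V D + m * g * (H + Crr * D) * V') * Ld -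
        m * g * (H + Crr * D) * V D * (D / Ld)) / Ld ^ 2) D :=
    hnum.div hLderiv hL.ne'
  have hcube : HasDerivAt (fun s => b * V s ^ 3) (b * (3 * V D ^ 2 * V')) D := by
    simpa using (hderiv.pow 3).const_mul b
  have htot := hdiv.add hcube
  have hzero : HasDerivAt
      (fun s => m * g * (H + Crr * s) * V s / Real.sqrt (H ^ 2 + s ^ 2) + b * (V s) ^ 3)
      0 D := (hasDerivAt_const D c).congr_of_eventuallyEq heq
  have hE := htot.unique hzero
  have hden : 0 < m * g * (H + Crr * D) + 3 * b * (V D) ^ 2 * Ld := by positivity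
  rw [eq_div_iff hden.ne', eq_comm]
  field_simp at hE ⊢
  linear_combination -hE + m * g * Crr * V D * hLsq
end

section
/- Let m, g, Crr, H, b, c > 0 be real constants. Define a(D) := m·g·(H + Crr·D) and L(D) := √(H² + D²). Let D > 0 and let V : (0,∞) → (0,∞) be a function differentiable at D whose values satisfy a(s)·V(s)/L(s) + b·V(s)³ = c for all s in a neighborhood of D. Then D·V(D) − L(D)²·V'(D) = V(D)·(m·g·Crr·L(D)² + 3·b·V(D)²·L(D)·D) / (a(D) + 3·b·V(D)²·L(D)), and in particular D·V(D) − L(D)²·V'(D) > 0. -/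
/-- D·V(D) − L(D)²·V'(D) equals the stated positive expression. -/
theorem DV_minus_L2_deriv (m g Crr H b c : ℝ)
    (hm : 0 < m) (hg : 0 < g) (hCrr : 0 < Crr) (hH : 0 < H) (hb : 0 < b) (hc : 0 < c)
    (D : ℝ) (hD : 0 < D)
    (V : ℝ → ℝ) (V' : ℝ)
    (hpos : ∀ s, 0 < s → 0 < V s)
    (hderiv : HasDerivAt V V' D)
    (heq : ∀ᶠ s in nhds D,
      m * g * (H + Crr * s) * V s / Real.sqrt (H ^ 2 + s ^ 2) + b * (V s) ^ 3 = c) :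
    D * V D - (Real.sqrt (H ^ 2 + D ^ 2)) ^ 2 * V' =
      V D * (m * g * Crr * (Real.sqrt (H ^ 2 + D ^ 2)) ^ 2 +
        3 * b * (V D) ^ 2 * Real.sqrt (H ^ 2 + D ^ 2) * D) /
      (m * g * (H + Crr * D) + 3 * b * (V D) ^ 2 * Real.sqrt (H ^ 2 + D ^ 2)) ∧
    0 < D * V D - (Real.sqrt (H ^ 2 + D ^ 2)) ^ 2 * V' := by
  set L : ℝ := Real.sqrt (H ^ 2 + D ^ 2) with hLdef
  have hsum : 0 < H ^ 2 + D ^ 2 := by positivity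
  have hL : 0 < L := Real.sqrt_pos.2 hsum
  have hL2 : L ^ 2 = H ^ 2 + D ^ 2 := Real.sq_sqrt hsum.le
  have hVD : 0 < V D := hpos D hD
  -- derivative of inner s ↦ H^2 + s^2
  have hin : HasDerivAt (fun s : ℝ => H ^ 2 + s ^ 2) (2 * D) D := by
    simpa using ((hasDerivAt_pow 2 D).const_add (H ^ 2))
  have hsqrt : HasDerivAt (fun s : ℝ => Real.sqrt (H ^ 2 + s ^ 2)) (D / L) D := by
    have h : HasDerivAt (fun s : ℝ => Real.sqrt (H ^ 2 + s ^ 2)) (1 / (2 * L) * (2 * D)) D :=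
      (Real.hasDerivAt_sqrt hsum.ne').comp D hin
    convert h using 1
    field_simp
  have hnum : HasDerivAt (fun s : ℝ => m * g * (H + Crr * s) * V s)
      (m * g * Crr * V D + m * g * (H + Crr * D) * V') D := by
    have h1 : HasDerivAt (fun s : ℝ => m * g * (H + Crr * s)) (m * g * Crr) D := by
      simpa using ((((hasDerivAt_id D).const_mul Crr).const_add H).const_mul (m * g))
    exact h1.mul hderiv
  have hf : HasDerivAt (fun s : ℝ => m * g * (H + Crr * s) * V s / Real.sqrt (H ^ 2 + s ^ 2)
      + b * (V s) ^ 3)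
      (((m * g * Crr * V D + m * g * (H + Crr * D) * V') * L
        - m * g * (H + Crr * D) * V D * (D / L)) / L ^ 2
        + b * (3 * V D ^ 2 * V')) D := by
    have hdiv := hnum.div hsqrt hL.ne'
    have hcube : HasDerivAt (fun s : ℝ => b * (V s) ^ 3) (b * (3 * V D ^ 2 * V')) D := by
      simpa using (hderiv.pow 3).const_mul b
    exact hdiv.add hcube
  have hzero : HasDerivAt (fun s : ℝ => m * g * (H + Crr * s) * V s / Real.sqrt (H ^ 2 + s ^ 2)
      + b * (V s) ^ 3) 0 D :=
    (hasDerivAt_const D c).congr_of_eventuallyEq heq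
  have hE := hf.unique hzero
  have hden : 0 < m * g * (H + Crr * D) + 3 * b * (V D) ^ 2 * L := by
    have : 0 < H + Crr * D := by positivity
    positivity
  have hkey : V' * L ^ 2 * (m * g * (H + Crr * D) + 3 * b * (V D) ^ 2 * L)
      = V D * (m * g * (H + Crr * D) * D - m * g * Crr * L ^ 2) := by
    field_simp at hE
    nlinarith [hE, sq_nonneg L, hL]
  have main : D * V D - L ^ 2 * V' =
      V D * (m * g * Crr * L ^ 2 + 3 * b * (V D) ^ 2 * L * D) /
      (m * g * (H + Crr * D) + 3 * b * (V D) ^ 2 * L) := by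
    rw [eq_div_iff hden.ne']
    nlinarith [hkey]
  refine ⟨main, ?_⟩
  rw [main]
  have h1 : 0 < V D * (m * g * Crr * L ^ 2 + 3 * b * (V D) ^ 2 * L * D) := by positivity
  exact div_pos h1 hden
end

section
/- (Lemma 2) Let m, g, Crr, H, b, c > 0 be real constants. Define a(D) := m·g·(H + Crr·D) and L(D) := √(H² + D²). Let D > 0 and let V : (0,∞) → (0,∞) be a function differentiable at D whose values satisfy a(s)·V(s)/L(s) + b·V(s)³ = c for all s in a neighborhood of D. Define T(s) := L(s) / V(s). Then T is differentiable at D, T'(D) = (D·V(D) − L(D)²·V'(D)) / (L(D)·V(D)²), and T'(D) > 0. -/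
/-- Lemma 2: T(s) = L(s)/V(s) is differentiable at D with
T'(D) = (D·V(D) − L(D)²·V'(D)) / (L(D)·V(D)²) > 0. -/
theorem ascent_time_wrt_D_deriv_pos (m g Crr H b c : ℝ)
    (hm : 0 < m) (hg : 0 < g) (hCrr : 0 < Crr) (hH : 0 < H) (hb : 0 < b) (hc : 0 < c)
    (D : ℝ) (hD : 0 < D)
    (V : ℝ → ℝ) (V' : ℝ)
    (hpos : ∀ s, 0 < s → 0 < V s)
    (hderiv : HasDerivAt V V' D)
    (heq : ∀ᶠ s in nhds D,
      m * g * (H + Crr * s) * V s / Real.sqrt (H ^ 2 + s ^ 2) + b * (V s) ^ 3 = c) :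
    HasDerivAt (fun s => Real.sqrt (H ^ 2 + s ^ 2) / V s)
      ((D * V D - (Real.sqrt (H ^ 2 + D ^ 2)) ^ 2 * V') /
        (Real.sqrt (H ^ 2 + D ^ 2) * (V D) ^ 2)) D ∧
    0 < (D * V D - (Real.sqrt (H ^ 2 + D ^ 2)) ^ 2 * V') /
        (Real.sqrt (H ^ 2 + D ^ 2) * (V D) ^ 2) := by
  set L : ℝ := Real.sqrt (H ^ 2 + D ^ 2) with hLdef
  have hHD : (0:ℝ) < H ^ 2 + D ^ 2 := by positivity
  have hLpos : 0 < L := Real.sqrt_pos.mpr hHD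
  have hL2 : L ^ 2 = H ^ 2 + D ^ 2 := Real.sq_sqrt hHD.le
  have hW : 0 < V D := hpos D hD
  -- derivative of inner polynomial
  have hinner : HasDerivAt (fun s : ℝ => H ^ 2 + s ^ 2) (2 * D) D := by
    simpa using ((hasDerivAt_pow 2 D).const_add (H ^ 2))
  have hLderiv : HasDerivAt (fun s : ℝ => Real.sqrt (H ^ 2 + s ^ 2)) (D / L) D := by
    have := (Real.hasDerivAt_sqrt hHD.ne').comp D hinner
    exact this.congr_deriv (by rw [← hLdef]; field_simp)
  -- derivative of T = L/V
  have hT : HasDerivAt (fun s => Real.sqrt (H ^ 2 + s ^ 2) / V s)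
      ((D / L * V D - L * V') / (V D) ^ 2) D := hLderiv.div hderiv hW.ne'
  have hTval : (D / L * V D - L * V') / (V D) ^ 2
      = (D * V D - L ^ 2 * V') / (L * (V D) ^ 2) := by
    field_simp
  -- implicit differentiation
  have ha : HasDerivAt (fun s : ℝ => m * g * (H + Crr * s)) (m * g * Crr) D := by
    simpa using (((hasDerivAt_id D).const_mul Crr).const_add H).const_mul (m * g)
  have haV : HasDerivAt (fun s : ℝ => m * g * (H + Crr * s) * V s)
      (m * g * Crr * V D + m * g * (H + Crr * D) * V') D := ha.mul hderiv
  have hG : HasDerivAt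
      (fun s => m * g * (H + Crr * s) * V s / Real.sqrt (H ^ 2 + s ^ 2) + b * (V s) ^ 3)
      (((m * g * Crr * V D + m * g * (H + Crr * D) * V') * L
          - m * g * (H + Crr * D) * V D * (D / L)) / L ^ 2
        + b * (3 * (V D) ^ 2 * V')) D := by
    exact (haV.div hLderiv hLpos.ne').add
      (((hderiv.pow 3).const_mul b).congr_deriv (by ring))
  have hG0 : HasDerivAt
      (fun s => m * g * (H + Crr * s) * V s / Real.sqrt (H ^ 2 + s ^ 2) + b * (V s) ^ 3)
      0 D := (hasDerivAt_const D c).congr_of_eventuallyEq heq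
  have hkey : ((m * g * Crr * V D + m * g * (H + Crr * D) * V') * L
          - m * g * (H + Crr * D) * V D * (D / L)) / L ^ 2
        + b * (3 * (V D) ^ 2 * V') = 0 := hG.unique hG0
  -- clear denominators
  have hkey2 : (m * g * Crr * V D + m * g * (H + Crr * D) * V') * L ^ 2
      - m * g * (H + Crr * D) * V D * D
      + 3 * b * (V D) ^ 2 * V' * L ^ 2 * L = 0 := by
    have hLne : L ≠ 0 := hLpos.ne'
    field_simp at hkey
    linarith [hkey]
  set W := V D
  set A := m * g * (H + Crr * D) with hA
  have hS : 0 < A + 3 * b * W ^ 2 * L := by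
    have : 0 < A := by positivity
    positivity
  have hmain : (D * W - L ^ 2 * V') * (A + 3 * b * W ^ 2 * L)
      = W * (3 * b * W ^ 2 * L * D + m * g * Crr * L ^ 2) := by
    linear_combination -hkey2
  have hnum : 0 < D * W - L ^ 2 * V' := by
    have hrhs : 0 < W * (3 * b * W ^ 2 * L * D + m * g * Crr * L ^ 2) := by positivity
    nlinarith [hmain, hS, hrhs]
  constructor
  · rw [← hTval]; exact hT
  · exact div_pos hnum (by positivity)
end

section
/- Let m, g, Crr, H, b, c > 0 be real constants. Define a(D) := m·g·(H + Crr·D) and L(D) := √(H² + D²), and for each D > 0 let V(D) be the unique positive real solution of a(D)·V/L(D) + b·V³ = c. Then the ascent time T(D) := L(D)/V(D) is strictly increasing on (0,∞): if 0 < D₁ < D₂ then L(D₁)/V(D₁) < L(D₂)/V(D₂). -/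
/-- for fixed height gain H, the straight-line ascent time
T(D) = L(D)/V(D) strictly increases with the horizontal distance D. -/
theorem ascent_time_wrt_D_strictMono (m g Crr H b c : ℝ)
    (hm : 0 < m) (hg : 0 < g) (hCrr : 0 < Crr) (hH : 0 < H) (hb : 0 < b) (hc : 0 < c)
    (V : ℝ → ℝ)
    (hV : ∀ D, 0 < D → 0 < V D ∧
      m * g * (H + Crr * D) * V D / Real.sqrt (H ^ 2 + D ^ 2) + b * (V D) ^ 3 = c)
    (D₁ D₂ : ℝ) (h₁ : 0 < D₁) (h₁₂ : D₁ < D₂) :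
    Real.sqrt (H ^ 2 + D₁ ^ 2) / V D₁ < Real.sqrt (H ^ 2 + D₂ ^ 2) / V D₂ := by
  obtain ⟨hV1, hE1⟩ := hV D₁ h₁
  obtain ⟨hV2, hE2⟩ := hV D₂ (h₁.trans h₁₂)
  set L₁ := Real.sqrt (H ^ 2 + D₁ ^ 2) with hL1def
  set L₂ := Real.sqrt (H ^ 2 + D₂ ^ 2) with hL2def
  have hL1 : 0 < L₁ := Real.sqrt_pos.2 (by positivity)
  have hL2 : 0 < L₂ := Real.sqrt_pos.2 (by positivity)
  have hL12 : L₁ < L₂ := Real.sqrt_lt_sqrt (by positivity) (by nlinarith)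
  have ha : m * g * (H + Crr * D₁) < m * g * (H + Crr * D₂) := by nlinarith [mul_pos (mul_pos hm hg) (mul_pos hCrr (sub_pos.2 h₁₂))]
  have ha1 : 0 < m * g * (H + Crr * D₁) := by positivity
  by_contra hcon
  push_neg at hcon
  have key : m * g * (H + Crr * D₁) * V D₁ / L₁ < m * g * (H + Crr * D₂) * V D₂ / L₂ := by
    have e1 : m * g * (H + Crr * D₁) * V D₁ / L₁
        = m * g * (H + Crr * D₁) / (L₁ / V D₁) := by
      field_simp
    have e2 : m * g * (H + Crr * D₂) * V D₂ / L₂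
        = m * g * (H + Crr * D₂) / (L₂ / V D₂) := by
      field_simp
    rw [e1, e2]
    have hT2 : 0 < L₂ / V D₂ := by positivity
    exact div_lt_div₀ ha hcon (ha1.trans ha).le hT2
  have hV21 : V D₂ < V D₁ := by
    have hcube : b * (V D₂) ^ 3 < b * (V D₁) ^ 3 := by linarith
    by_contra hge
    push_neg at hge
    have := pow_le_pow_left₀ hV1.le hge 3
    nlinarith
  have : L₁ / V D₁ < L₂ / V D₂ := div_lt_div₀ hL12 hV21.le hL2.le hV2
  linarith
end

section
/- Let m, g, Crr, H, b, c > 0 be real constants. For each slope angle θ ∈ (0, π/2), let V(θ) be the unique positive real solution of m·g·(sin θ + Crr·cos θ)·V + b·V³ = c. Then the vertical speed θ ↦ V(θ)·sin θ is strictly increasing on (0, π/2). -/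
/-- the vertical speed θ ↦ V(θ)·sin θ is strictly increasing on (0, π/2). -/
theorem vertical_speed_strictMono (m g Crr H b c : ℝ)
    (hm : 0 < m) (hg : 0 < g) (hCrr : 0 < Crr) (hH : 0 < H) (hb : 0 < b) (hc : 0 < c)
    (V : ℝ → ℝ)
    (hV : ∀ θ ∈ Set.Ioo (0 : ℝ) (Real.pi / 2), 0 < V θ ∧
      m * g * (Real.sin θ + Crr * Real.cos θ) * V θ + b * (V θ) ^ 3 = c) :
    StrictMonoOn (fun θ => V θ * Real.sin θ) (Set.Ioo (0 : ℝ) (Real.pi / 2)) := by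
  intro θ₁ h₁ θ₂ h₂ hlt
  obtain ⟨hV₁, he₁⟩ := hV θ₁ h₁
  obtain ⟨hV₂, he₂⟩ := hV θ₂ h₂
  obtain ⟨h₁0, h₁p⟩ := h₁
  obtain ⟨h₂0, h₂p⟩ := h₂
  have hpi := Real.pi_pos
  have hs₁ : 0 < Real.sin θ₁ := Real.sin_pos_of_pos_of_lt_pi h₁0 (by linarith)
  have hs₂ : 0 < Real.sin θ₂ := Real.sin_pos_of_pos_of_lt_pi h₂0 (by linarith)
  have hc₁ : 0 < Real.cos θ₁ := Real.cos_pos_of_mem_Ioo ⟨by linarith, h₁p⟩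
  have hc₂ : 0 < Real.cos θ₂ := Real.cos_pos_of_mem_Ioo ⟨by linarith, h₂p⟩
  by_contra hle
  push_neg at hle
  -- u₂ ≤ u₁ where u = V sin θ
  have hsub : 0 < Real.sin (θ₂ - θ₁) :=
    Real.sin_pos_of_pos_of_lt_pi (sub_pos.mpr hlt) (by linarith)
  rw [Real.sin_sub] at hsub
  -- w₂ < w₁ where w = V cos θ
  have hw : V θ₂ * Real.cos θ₂ < V θ₁ * Real.cos θ₁ := by
    rw [← mul_lt_mul_iff_left₀ (mul_pos hs₁ hs₂)]
    nlinarith [mul_pos (mul_pos hV₂ hs₂) hsub, mul_le_mul_of_nonneg_right hle (mul_pos hc₁ hs₂).le]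
  -- hence V₂ < V₁
  have hV12 : V θ₂ < V θ₁ := by
    have e₁ := Real.sin_sq_add_cos_sq θ₁
    have e₂ := Real.sin_sq_add_cos_sq θ₂
    have q1 : (V θ₁ * Real.sin θ₁) ^ 2 + (V θ₁ * Real.cos θ₁) ^ 2 = (V θ₁) ^ 2 := by
      rw [mul_pow, mul_pow, ← mul_add, e₁, mul_one]
    have q2 : (V θ₂ * Real.sin θ₂) ^ 2 + (V θ₂ * Real.cos θ₂) ^ 2 = (V θ₂) ^ 2 := by
      rw [mul_pow, mul_pow, ← mul_add, e₂, mul_one]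
    have hsq : (V θ₂) ^ 2 < (V θ₁) ^ 2 := by
      nlinarith [mul_self_le_mul_self (mul_pos hV₂ hs₂).le hle,
        mul_self_lt_mul_self (mul_pos hV₂ hc₂).le hw]
    exact lt_of_pow_lt_pow_left₀ 2 hV₁.le hsq
  have hcube : (V θ₂) ^ 3 < (V θ₁) ^ 3 := by
    exact pow_lt_pow_left₀ hV12 hV₂.le (by norm_num)
  have hmg : 0 < m * g := mul_pos hm hg
  nlinarith [mul_le_mul_of_nonneg_left hle hmg.le,
    mul_lt_mul_of_pos_left hw (mul_pos hmg hCrr),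
    mul_lt_mul_of_pos_left hcube hb]
end

section
/- Let m, g, Crr, H, b, c > 0 be real constants. For each slope angle θ ∈ (0, π/2), let V(θ) be the unique positive real solution of m·g·(sin θ + Crr·cos θ)·V + b·V³ = c, and define the ascent time T(θ) := H / (V(θ)·sin θ) for a height gain H. Then T is strictly decreasing on (0, π/2). -/
/-- the ascent time T(θ) = H/(V(θ)·sin θ) is strictly decreasing
on (0, π/2). -/
theorem ascent_time_wrt_angle_strictAnti (m g Crr H b c : ℝ)
    (hm : 0 < m) (hg : 0 < g) (hCrr : 0 < Crr) (hH : 0 < H) (hb : 0 < b) (hc : 0 < c)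
    (V : ℝ → ℝ)
    (hV : ∀ θ ∈ Set.Ioo (0 : ℝ) (Real.pi / 2), 0 < V θ ∧
      m * g * (Real.sin θ + Crr * Real.cos θ) * V θ + b * (V θ) ^ 3 = c) :
    StrictAntiOn (fun θ => H / (V θ * Real.sin θ)) (Set.Ioo (0 : ℝ) (Real.pi / 2)) := by
  intro x hx y hy hxy
  obtain ⟨hVx, hEx⟩ := hV x hx
  obtain ⟨hVy, hEy⟩ := hV y hy
  have hpi := Real.pi_pos
  have hsx : 0 < Real.sin x := Real.sin_pos_of_pos_of_lt_pi hx.1 (by linarith [hx.2])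
  have hsy : 0 < Real.sin y := Real.sin_pos_of_pos_of_lt_pi hy.1 (by linarith [hy.2])
  have hcx : 0 < Real.cos x := Real.cos_pos_of_mem_Ioo ⟨by linarith [hx.1], hx.2⟩
  have hcy : 0 < Real.cos y := Real.cos_pos_of_mem_Ioo ⟨by linarith [hy.1], hy.2⟩
  have hsin : Real.sin x < Real.sin y :=
    Real.strictMonoOn_sin ⟨by linarith [hx.1], hx.2.le⟩ ⟨by linarith [hy.1], hy.2.le⟩ hxy
  have hcos : Real.cos y < Real.cos x :=
    Real.strictAntiOn_cos ⟨hx.1.le, by linarith [hx.2]⟩ ⟨hy.1.le, by linarith [hy.2]⟩ hxy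
  have key : V x * Real.sin x < V y * Real.sin y := by
    by_contra hle
    push_neg at hle
    have hVlt : V y < V x := by
      have h1 : V y * Real.sin x < V x * Real.sin x := by nlinarith
      exact lt_of_mul_lt_mul_right h1 hsx.le
    have hcub : b * (V y) ^ 3 < b * (V x) ^ 3 :=
      mul_lt_mul_of_pos_left (pow_lt_pow_left₀ hVlt hVy.le three_ne_zero) hb
    have hmg : 0 < m * g := mul_pos hm hg
    have hcc : Real.cos y * V y < Real.cos x * V x := by nlinarith
    nlinarith [mul_pos (mul_pos hmg hCrr) (sub_pos.mpr hcc),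
      mul_nonneg hmg.le (sub_nonneg.mpr hle)]
  exact div_lt_div_of_pos_left hH (mul_pos hVx hsx) key
end
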